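/- Let ψ ∈ L²(ℝ²) and let j ≥ 0 be an integer. Then the closed subspace W = closed linear span of {D_{2^j} (T^t_{(k,l)})^{2^{-2j}} ψ : k, l ∈ ℤ} in L²(ℝ²) is twisted shift-invariant: for every f ∈ W and every k', l' ∈ ℤ, T^t_{(k',l')} f ∈ W. -/

import Mathlib

open MeasureTheory Complex

noncomputable section

/-- The `λ`-twisted translation `(T^t_{(k,l)})^λ f (x,y) = e^{πiλ(xl - yk)} f(x-k, y-l)`. -/
def twistedTranslate (lam : ℝ) (k l : ℤ) (f : ℝ × ℝ → ℂ) : ℝ × ℝ → ℂ :=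
  fun p => Complex.exp ((↑(Real.pi * lam * (p.1 * l - p.2 * k)) : ℂ) * Complex.I) *
    f (p.1 - k, p.2 - l)

/-- The dilation `D_a f (x,y) = a f(ax, ay)`. -/
def dilate (a : ℝ) (f : ℝ × ℝ → ℂ) : ℝ × ℝ → ℂ :=
  fun p => (a : ℂ) * f (a * p.1, a * p.2)

/-- The kernel `K^λ_g(ξ,η) = ∫_ℝ g(x, η-ξ) e^{πiλx(η+ξ)} dx` of the Weyl transform `W_λ(g)`. -/
def weylKernel (lam : ℝ) (g : ℝ × ℝ → ℂ) (ξ η : ℝ) : ℂ :=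
  ∫ x : ℝ, g (x, η - ξ) * Complex.exp ((↑(Real.pi * lam * x * (η + ξ)) : ℂ) * Complex.I)

lemma memℒp_unimodular_mul {e f : ℝ × ℝ → ℂ} (he : AEStronglyMeasurable e volume)
    (hnorm : ∀ x, ‖e x‖ = 1) (hf : MemLp f 2 (volume : Measure (ℝ × ℝ))) :
    MemLp (fun x => e x * f x) 2 volume := by
  refine ⟨he.mul hf.1, ?_⟩
  have h : eLpNorm (fun x => e x * f x) 2 volume = eLpNorm f 2 volume := by
    apply eLpNorm_congr_norm_ae
    filter_upwards with x
    rw [norm_mul, hnorm x, one_mul]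
  rw [h]; exact hf.2

lemma memℒp_twistedTranslate (lam : ℝ) (k l : ℤ) {f : ℝ × ℝ → ℂ}
    (hf : MemLp f 2 (volume : Measure (ℝ × ℝ))) :
    MemLp (twistedTranslate lam k l f) 2 volume := by
  have hmp : MeasurePreserving (fun p : ℝ × ℝ => p - ((k : ℝ), (l : ℝ))) volume volume :=
    measurePreserving_sub_right volume _
  have h2 : MemLp (fun p : ℝ × ℝ => f (p.1 - k, p.2 - l)) 2 volume := by
    have := hf.comp_measurePreserving hmp
    exact this
  have he : AEStronglyMeasurable (fun p : ℝ × ℝ =>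
      Complex.exp ((↑(Real.pi * lam * (p.1 * l - p.2 * k)) : ℂ) * Complex.I)) volume := by
    apply Continuous.aestronglyMeasurable
    fun_prop
  exact memℒp_unimodular_mul he (fun x => by simp [Complex.norm_exp]) h2

lemma memℒp_dilate {a : ℝ} (ha : a ≠ 0) {f : ℝ × ℝ → ℂ}
    (hf : MemLp f 2 (volume : Measure (ℝ × ℝ))) :
    MemLp (dilate a f) 2 volume := by
  have hmap : Measure.map (fun p : ℝ × ℝ => a • p) (volume : Measure (ℝ × ℝ)) =
      ENNReal.ofReal |(a ^ Module.finrank ℝ (ℝ × ℝ))⁻¹| • volume :=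
    Measure.map_addHaar_smul volume ha
  have hmem : MemLp f 2 (Measure.map (fun p : ℝ × ℝ => a • p) (volume : Measure (ℝ × ℝ))) := by
    rw [hmap]
    exact hf.smul_measure (by finiteness)
  have hcomp : MemLp (f ∘ fun p : ℝ × ℝ => a • p) 2 (volume : Measure (ℝ × ℝ)) :=
    (memLp_map_measure_iff hmem.1 (by fun_prop)).mp hmem
  have h : MemLp (fun p : ℝ × ℝ => f (a * p.1, a * p.2)) 2 volume := hcomp
  exact h.const_mul (a : ℂ)

/-- The twisted translation as an operator on `L²(ℝ²)`. -/
def twistedTranslateLp (lam : ℝ) (k l : ℤ) (f : Lp ℂ 2 (volume : Measure (ℝ × ℝ))) :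
    Lp ℂ 2 (volume : Measure (ℝ × ℝ)) :=
  (memℒp_twistedTranslate lam k l (Lp.memLp f)).toLp _

/-- The dilation as an operator on `L²(ℝ²)` (with junk value `0` for `a = 0`). -/
def dilateLp (a : ℝ) (f : Lp ℂ 2 (volume : Measure (ℝ × ℝ))) :
    Lp ℂ 2 (volume : Measure (ℝ × ℝ)) :=
  if ha : a = 0 then 0 else (memℒp_dilate ha (Lp.memLp f)).toLp _

section Aux

lemma twistedTranslate_congr_ae (lam : ℝ) (k l : ℤ) {f g : ℝ × ℝ → ℂ}
    (h : f =ᵐ[(volume : Measure (ℝ × ℝ))] g) :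
    twistedTranslate lam k l f =ᵐ[(volume : Measure (ℝ × ℝ))] twistedTranslate lam k l g := by
  have hmp : MeasurePreserving (fun p : ℝ × ℝ => p - ((k : ℝ), (l : ℝ))) volume volume :=
    measurePreserving_sub_right volume _
  have h2 := hmp.quasiMeasurePreserving.ae_eq h
  filter_upwards [h2] with p hp
  have : f (p.1 - k, p.2 - l) = g (p.1 - k, p.2 - l) := by
    simpa [Function.comp, Prod.sub_def] using hp
  simp [twistedTranslate, this]

lemma dilate_congr_ae {a : ℝ} (ha : a ≠ 0) {f g : ℝ × ℝ → ℂ}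
    (h : f =ᵐ[(volume : Measure (ℝ × ℝ))] g) :
    dilate a f =ᵐ[(volume : Measure (ℝ × ℝ))] dilate a g := by
  have hmap : Measure.map (fun p : ℝ × ℝ => a • p) (volume : Measure (ℝ × ℝ)) =
      ENNReal.ofReal |(a ^ Module.finrank ℝ (ℝ × ℝ))⁻¹| • volume :=
    Measure.map_addHaar_smul volume ha
  have hq : Measure.QuasiMeasurePreserving (fun p : ℝ × ℝ => a • p) volume volume := by
    refine ⟨by fun_prop, ?_⟩
    rw [hmap]; exact Measure.smul_absolutelyContinuous
  have h2 := hq.ae_eq h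
  filter_upwards [h2] with p hp
  have : f (a * p.1, a * p.2) = g (a * p.1, a * p.2) := by
    simpa [Function.comp, Prod.smul_def, smul_eq_mul] using hp
  simp [dilate, this]

lemma coeFn_twistedTranslateLp (lam : ℝ) (k l : ℤ) (F : Lp ℂ 2 (volume : Measure (ℝ × ℝ))) :
    twistedTranslateLp lam k l F =ᵐ[(volume : Measure (ℝ × ℝ))] twistedTranslate lam k l F :=
  MemLp.coeFn_toLp _

lemma coeFn_dilateLp {a : ℝ} (ha : a ≠ 0) (F : Lp ℂ 2 (volume : Measure (ℝ × ℝ))) :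
    dilateLp a F =ᵐ[(volume : Measure (ℝ × ℝ))] dilate a F := by
  rw [dilateLp, dif_neg ha]; exact MemLp.coeFn_toLp _

lemma norm_twistedTranslateLp (lam : ℝ) (k l : ℤ) (F : Lp ℂ 2 (volume : Measure (ℝ × ℝ))) :
    ‖twistedTranslateLp lam k l F‖ = ‖F‖ := by
  have hmp : MeasurePreserving (fun p : ℝ × ℝ => p - ((k : ℝ), (l : ℝ))) volume volume :=
    measurePreserving_sub_right volume _
  rw [twistedTranslateLp, Lp.norm_toLp]
  have h1 : eLpNorm (twistedTranslate lam k l F) 2 (volume : Measure (ℝ × ℝ)) =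
      eLpNorm ((F : ℝ × ℝ → ℂ) ∘ fun p : ℝ × ℝ => p - ((k : ℝ), (l : ℝ))) 2 volume := by
    apply eLpNorm_congr_norm_ae
    filter_upwards with p
    simp [twistedTranslate, Function.comp, Prod.sub_def, Complex.norm_exp]
  rw [h1, eLpNorm_comp_measurePreserving (Lp.aestronglyMeasurable F) hmp, Lp.norm_def]

/-- The twisted translation as a continuous linear operator on `L²(ℝ²)`. -/
def twistedTranslateCLM (k l : ℤ) :
    Lp ℂ 2 (volume : Measure (ℝ × ℝ)) →L[ℂ] Lp ℂ 2 (volume : Measure (ℝ × ℝ)) :=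
  LinearMap.mkContinuous
    { toFun := twistedTranslateLp 1 k l
      map_add' := fun F G => by
        apply Lp.ext
        have e1 := coeFn_twistedTranslateLp 1 k l (F + G)
        have e2 := twistedTranslate_congr_ae 1 k l (Lp.coeFn_add F G)
        have e3 := coeFn_twistedTranslateLp 1 k l F
        have e4 := coeFn_twistedTranslateLp 1 k l G
        have e5 := Lp.coeFn_add (twistedTranslateLp 1 k l F) (twistedTranslateLp 1 k l G)
        filter_upwards [e1, e2, e3, e4, e5] with p hp1 hp2 hp3 hp4 hp5
        rw [hp1, hp2, hp5, Pi.add_apply, hp3, hp4]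
        simp [twistedTranslate, mul_add]
      map_smul' := fun c F => by
        apply Lp.ext
        have e1 := coeFn_twistedTranslateLp 1 k l (c • F)
        have e2 := twistedTranslate_congr_ae 1 k l (Lp.coeFn_smul c F)
        have e3 := coeFn_twistedTranslateLp 1 k l F
        have e5 := Lp.coeFn_smul c (twistedTranslateLp 1 k l F)
        filter_upwards [e1, e2, e3, e5] with p hp1 hp2 hp3 hp5
        rw [RingHom.id_apply, hp1, hp2, hp5, Pi.smul_apply, hp3]
        simp only [twistedTranslate, Pi.smul_apply, smul_eq_mul]
        ring }
    1 (fun F => by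
      rw [one_mul]
      exact le_of_eq (norm_twistedTranslateLp 1 k l F))

lemma hlam_aux (j : ℕ) : ((2 : ℝ) ^ (-(2 * (j : ℤ)))) * ((2 : ℝ) ^ j * (2 : ℝ) ^ j) = 1 := by
  rw [show ((2 : ℝ) ^ j) = (2 : ℝ) ^ (j : ℤ) from (zpow_natCast 2 j).symm,
    ← zpow_add₀ (two_ne_zero : (2 : ℝ) ≠ 0), ← zpow_add₀ (two_ne_zero : (2 : ℝ) ≠ 0),
    show (-(2 * (j : ℤ)) + ((j : ℤ) + (j : ℤ))) = 0 by ring, zpow_zero]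

lemma key_pointwise (j : ℕ) (k l k' l' : ℤ) (g : ℝ × ℝ → ℂ) :
    twistedTranslate 1 k' l'
      (dilate ((2 : ℝ) ^ j) (twistedTranslate ((2 : ℝ) ^ (-(2 * (j : ℤ)))) k l g)) =
    Complex.exp ((↑(Real.pi * ((2 : ℝ) ^ (-(2 * (j : ℤ)))) *
        ((((2 : ℤ) ^ j * l' : ℤ) : ℝ) * k - (((2 : ℤ) ^ j * k' : ℤ) : ℝ) * l)) : ℂ) *
        Complex.I) •
      dilate ((2 : ℝ) ^ j)
        (twistedTranslate ((2 : ℝ) ^ (-(2 * (j : ℤ)))) ((2 : ℤ) ^ j * k' + k)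
          ((2 : ℤ) ^ j * l' + l) g) := by
  funext p
  simp only [twistedTranslate, dilate, Pi.smul_apply, smul_eq_mul, mul_one, one_mul]
  have hlam := hlam_aux j
  have harg : (((2 : ℝ) ^ j * (p.1 - (k' : ℝ)) - (k : ℝ), (2 : ℝ) ^ j * (p.2 - (l' : ℝ)) - (l : ℝ))
      : ℝ × ℝ) =
      ((2 : ℝ) ^ j * p.1 - (((2 : ℤ) ^ j * k' + k : ℤ) : ℝ),
       (2 : ℝ) ^ j * p.2 - (((2 : ℤ) ^ j * l' + l : ℤ) : ℝ)) := by
    simp only [Prod.mk.injEq]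
    constructor <;> (push_cast; ring)
  rw [harg]
  have hR : Real.pi * (p.1 * (l' : ℝ) - p.2 * (k' : ℝ)) +
      Real.pi * ((2 : ℝ) ^ (-(2 * (j : ℤ)))) *
        ((2 : ℝ) ^ j * (p.1 - (k' : ℝ)) * (l : ℝ) - (2 : ℝ) ^ j * (p.2 - (l' : ℝ)) * (k : ℝ)) =
      Real.pi * ((2 : ℝ) ^ (-(2 * (j : ℤ)))) *
        ((((2 : ℤ) ^ j * l' : ℤ) : ℝ) * (k : ℝ) - (((2 : ℤ) ^ j * k' : ℤ) : ℝ) * (l : ℝ)) +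
      Real.pi * ((2 : ℝ) ^ (-(2 * (j : ℤ)))) *
        ((2 : ℝ) ^ j * p.1 * (((2 : ℤ) ^ j * l' + l : ℤ) : ℝ) -
         (2 : ℝ) ^ j * p.2 * (((2 : ℤ) ^ j * k' + k : ℤ) : ℝ)) := by
    push_cast
    linear_combination (Real.pi * (p.2 * (k' : ℝ) - p.1 * (l' : ℝ))) * hlam
  have hE : Complex.exp ((↑(Real.pi * (p.1 * (l' : ℝ) - p.2 * (k' : ℝ))) : ℂ) * Complex.I) *
      Complex.exp ((↑(Real.pi * ((2 : ℝ) ^ (-(2 * (j : ℤ)))) *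
        ((2 : ℝ) ^ j * (p.1 - (k' : ℝ)) * (l : ℝ) - (2 : ℝ) ^ j * (p.2 - (l' : ℝ)) * (k : ℝ))) : ℂ)
        * Complex.I) =
      Complex.exp ((↑(Real.pi * ((2 : ℝ) ^ (-(2 * (j : ℤ)))) *
        ((((2 : ℤ) ^ j * l' : ℤ) : ℝ) * (k : ℝ) - (((2 : ℤ) ^ j * k' : ℤ) : ℝ) * (l : ℝ))) : ℂ) *
        Complex.I) *
      Complex.exp ((↑(Real.pi * ((2 : ℝ) ^ (-(2 * (j : ℤ)))) *
        ((2 : ℝ) ^ j * p.1 * (((2 : ℤ) ^ j * l' + l : ℤ) : ℝ) -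
         (2 : ℝ) ^ j * p.2 * (((2 : ℤ) ^ j * k' + k : ℤ) : ℝ))) : ℂ) * Complex.I) := by
    rw [← Complex.exp_add, ← Complex.exp_add, ← add_mul, ← add_mul,
      ← Complex.ofReal_add, ← Complex.ofReal_add, hR]
  rw [show (((2 : ℝ) ^ j : ℝ) : ℂ) = (2 : ℂ) ^ j from by push_cast; ring]
  linear_combination ((2 : ℂ) ^ j *
    g ((2 : ℝ) ^ j * p.1 - (((2 : ℤ) ^ j * k' + k : ℤ) : ℝ),
       (2 : ℝ) ^ j * p.2 - (((2 : ℤ) ^ j * l' + l : ℤ) : ℝ))) * hE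

lemma key_Lp (ψ : ℝ × ℝ → ℂ) (hψ : MemLp ψ 2 (volume : Measure (ℝ × ℝ))) (j : ℕ)
    (k l k' l' : ℤ) :
    twistedTranslateLp 1 k' l' (dilateLp ((2 : ℝ) ^ j)
      (twistedTranslateLp ((2 : ℝ) ^ (-(2 * (j : ℤ)))) k l (hψ.toLp ψ))) =
    Complex.exp ((↑(Real.pi * ((2 : ℝ) ^ (-(2 * (j : ℤ)))) *
        ((((2 : ℤ) ^ j * l' : ℤ) : ℝ) * k - (((2 : ℤ) ^ j * k' : ℤ) : ℝ) * l)) : ℂ) *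
        Complex.I) •
      dilateLp ((2 : ℝ) ^ j)
        (twistedTranslateLp ((2 : ℝ) ^ (-(2 * (j : ℤ)))) ((2 : ℤ) ^ j * k' + k)
          ((2 : ℤ) ^ j * l' + l) (hψ.toLp ψ)) := by
  have ha : ((2 : ℝ) ^ j) ≠ 0 := by positivity
  set lam : ℝ := (2 : ℝ) ^ (-(2 * (j : ℤ))) with hlamdef
  set Ψ := hψ.toLp ψ with hΨ
  set c : ℂ := Complex.exp ((↑(Real.pi * lam *
      ((((2 : ℤ) ^ j * l' : ℤ) : ℝ) * k - (((2 : ℤ) ^ j * k' : ℤ) : ℝ) * l)) : ℂ) *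
      Complex.I) with hc
  apply Lp.ext
  have e1 := coeFn_twistedTranslateLp 1 k' l' (dilateLp ((2 : ℝ) ^ j)
    (twistedTranslateLp lam k l Ψ))
  have e2 := twistedTranslate_congr_ae 1 k' l'
    (coeFn_dilateLp ha (twistedTranslateLp lam k l Ψ))
  have e3 := twistedTranslate_congr_ae 1 k' l'
    (dilate_congr_ae ha (coeFn_twistedTranslateLp lam k l Ψ))
  have e4 := key_pointwise j k l k' l' (Ψ : ℝ × ℝ → ℂ)
  have f1 := Lp.coeFn_smul c (dilateLp ((2 : ℝ) ^ j)
    (twistedTranslateLp lam ((2 : ℤ) ^ j * k' + k) ((2 : ℤ) ^ j * l' + l) Ψ))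
  have f2 := coeFn_dilateLp ha
    (twistedTranslateLp lam ((2 : ℤ) ^ j * k' + k) ((2 : ℤ) ^ j * l' + l) Ψ)
  have f3 := dilate_congr_ae ha
    (coeFn_twistedTranslateLp lam ((2 : ℤ) ^ j * k' + k) ((2 : ℤ) ^ j * l' + l) Ψ)
  filter_upwards [e1, e2, e3, f1, f2, f3] with p hp1 hp2 hp3 hq1 hq2 hq3
  rw [hp1, hp2, hp3, e4, hq1, Pi.smul_apply, Pi.smul_apply, smul_eq_mul, smul_eq_mul, hq2, hq3]

end Aux

/-- For `ψ ∈ L²(ℝ²)` and an integer `j ≥ 0`, the closed linear span `W` of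
`{D_{2^j} (T^t_{(k,l)})^{2^{-2j}} ψ : k, l ∈ ℤ}` in `L²(ℝ²)` is twisted shift-invariant. -/
theorem statement_10 (ψ : ℝ × ℝ → ℂ) (hψ : MemLp ψ 2 (volume : Measure (ℝ × ℝ))) (j : ℕ)
    (W : Submodule ℂ (Lp ℂ 2 (volume : Measure (ℝ × ℝ))))
    (hW : W = (Submodule.span ℂ (Set.range fun kl : ℤ × ℤ =>
      dilateLp ((2 : ℝ) ^ j) (twistedTranslateLp ((2 : ℝ) ^ (-(2 * (j : ℤ)))) kl.1 kl.2
        (hψ.toLp ψ)))).topologicalClosure) :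
    ∀ f ∈ W, ∀ k' l' : ℤ, twistedTranslateLp 1 k' l' f ∈ W := by
  subst hW
  intro f hf k' l'
  set G : ℤ × ℤ → Lp ℂ 2 (volume : Measure (ℝ × ℝ)) := fun kl : ℤ × ℤ =>
    dilateLp ((2 : ℝ) ^ j) (twistedTranslateLp ((2 : ℝ) ^ (-(2 * (j : ℤ)))) kl.1 kl.2
      (hψ.toLp ψ)) with hG
  have hmaps : Set.MapsTo (twistedTranslateCLM k' l')
      ((Submodule.span ℂ (Set.range G) : Submodule ℂ _) : Set _)
      ((Submodule.span ℂ (Set.range G) : Submodule ℂ _) : Set _) := by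
    have hle : Submodule.map (twistedTranslateCLM k' l').toLinearMap
        (Submodule.span ℂ (Set.range G)) ≤ Submodule.span ℂ (Set.range G) := by
      rw [Submodule.map_span, Submodule.span_le]
      rintro y ⟨x, ⟨⟨⟨k, l⟩, rfl⟩, rfl⟩⟩
      have hkey := key_Lp ψ hψ j k l k' l'
      have : (twistedTranslateCLM k' l') (G (k, l)) =
          Complex.exp ((↑(Real.pi * ((2 : ℝ) ^ (-(2 * (j : ℤ)))) *
            ((((2 : ℤ) ^ j * l' : ℤ) : ℝ) * k - (((2 : ℤ) ^ j * k' : ℤ) : ℝ) * l)) : ℂ) *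
            Complex.I) • G ((2 : ℤ) ^ j * k' + k, (2 : ℤ) ^ j * l' + l) := hkey
      simp only [ContinuousLinearMap.coe_coe, this]
      exact Submodule.smul_mem _ _ (Submodule.subset_span (Set.mem_range_self _))
    intro x hx
    exact hle ⟨x, hx, rfl⟩
  have h1 : (twistedTranslateCLM k' l') f ∈
      closure ((Submodule.span ℂ (Set.range G) : Submodule ℂ _) : Set _) :=
    map_mem_closure (twistedTranslateCLM k' l').continuous hf hmaps
  exact h1
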